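/- arXiv:2407.09582 — 3 statements merged into one kernel-verified Lean document; each statement's English description precedes it below -/
import Mathlib

section
/- Let d ≥ 1 and let X be a d×d real symmetric positive definite matrix such that R * X * Rᵀ = X for every R in the special orthogonal group SO(d) (real orthogonal matrices of determinant 1). Then there exists a real number c > 0 such that X = c • I, where I is the identity matrix. -/
open Matrix

private def rotMat (d : ℕ) (i j : Fin d) : Matrix (Fin d) (Fin d) ℝ :=
  ((Equiv.swap i j).permMatrix ℝ) *
    Matrix.diagonal (fun a => if a = i then (-1:ℝ) else 1)

private lemma rotMat_apply (d : ℕ) (i j : Fin d) (k a : Fin d) :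
    rotMat d i j k a = if a = Equiv.swap i j k then (if a = i then -1 else 1) else 0 := by
  rw [rotMat, Matrix.mul_diagonal, Equiv.Perm.permMatrix, PEquiv.toMatrix_apply,
    Equiv.toPEquiv_apply]
  simp only [Option.mem_def, Option.some.injEq]
  split_ifs <;> simp_all

private lemma rotMat_det (d : ℕ) (i j : Fin d) (hij : i ≠ j) : (rotMat d i j).det = 1 := by
  rw [rotMat, Matrix.det_mul, Matrix.det_permutation, Equiv.Perm.sign_swap hij,
    Matrix.det_diagonal]
  rw [Finset.prod_eq_single i (fun b _ hb => if_neg hb)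
    (fun h => absurd (Finset.mem_univ i) h)]
  simp

private lemma rotMat_orth (d : ℕ) (i j : Fin d) : rotMat d i j * (rotMat d i j)ᵀ = 1 := by
  rw [rotMat, Matrix.transpose_mul, Matrix.diagonal_transpose]
  have h1 : Matrix.diagonal (fun a => if a = i then (-1:ℝ) else 1) *
      Matrix.diagonal (fun a => if a = i then (-1:ℝ) else 1) = 1 := by
    rw [Matrix.diagonal_mul_diagonal]
    have he : (fun a => (if a = i then (-1:ℝ) else 1) * if a = i then (-1:ℝ) else 1) =
        fun _ => (1:ℝ) := by
      funext a; split_ifs <;> norm_num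
    rw [he, Matrix.diagonal_one]
  have h2 : ((Equiv.swap i j).permMatrix ℝ) * ((Equiv.swap i j).permMatrix ℝ)ᵀ = 1 := by
    rw [← PEquiv.toMatrix_symm, ← Equiv.toPEquiv_symm, ← PEquiv.toMatrix_trans,
      ← Equiv.toPEquiv_trans]
    simp
  rw [Matrix.mul_assoc, ← Matrix.mul_assoc (Matrix.diagonal _), h1, Matrix.one_mul, h2]

private lemma rotMat_conj (d : ℕ) (i j : Fin d) (X : Matrix (Fin d) (Fin d) ℝ) (k l : Fin d) :
    (rotMat d i j * X * (rotMat d i j)ᵀ) k l =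
      (if Equiv.swap i j k = i then (-1:ℝ) else 1) * (if Equiv.swap i j l = i then (-1:ℝ) else 1)
        * X (Equiv.swap i j k) (Equiv.swap i j l) := by
  simp [Matrix.mul_apply, rotMat_apply, Matrix.transpose_apply, ite_mul, mul_ite,
    Finset.sum_ite_eq', Finset.mul_sum]

/-- If a real symmetric positive definite `d × d` matrix `X` satisfies
`R * X * Rᵀ = X` for every `R` in the special orthogonal group `SO(d)`, then `X = c • 1`
for some real `c > 0`. -/
theorem fixed_by_SO_implies_scalar (d : ℕ) (hd : 1 ≤ d)
    (X : Matrix (Fin d) (Fin d) ℝ) (hX : X.PosDef)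
    (hfix : ∀ R : Matrix (Fin d) (Fin d) ℝ, R * Rᵀ = 1 → R.det = 1 → R * X * Rᵀ = X) :
    ∃ c : ℝ, 0 < c ∧ X = c • (1 : Matrix (Fin d) (Fin d) ℝ) := by
  set e0 : Fin d := ⟨0, hd⟩ with he0
  have key : ∀ i j : Fin d, i ≠ j → ∀ k l : Fin d,
      X k l = (if Equiv.swap i j k = i then (-1:ℝ) else 1) *
        (if Equiv.swap i j l = i then (-1:ℝ) else 1) * X (Equiv.swap i j k) (Equiv.swap i j l) := by
    intro i j hij k l
    conv_lhs => rw [← hfix (rotMat d i j) (rotMat_orth d i j) (rotMat_det d i j hij)]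
    exact rotMat_conj d i j X k l
  have hsym : ∀ k l, X l k = X k l := fun k l => by
    have := hX.1
    rw [Matrix.IsHermitian] at this
    conv_lhs => rw [← this]
    rfl
  have hoff : ∀ k l : Fin d, k ≠ l → X k l = 0 := by
    intro k l hkl
    have h := key k l hkl k l
    rw [Equiv.swap_apply_left, Equiv.swap_apply_right] at h
    rw [if_neg (Ne.symm hkl), if_pos rfl] at h
    have h2 := hsym k l
    linarith
  have hdiag : ∀ k : Fin d, X k k = X e0 e0 := by
    intro k
    by_cases hk : k = e0
    · rw [hk]
    · have h := key k e0 hk k k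
      rw [Equiv.swap_apply_left] at h
      rw [if_neg (fun he => hk he.symm)] at h
      linarith
  refine ⟨X e0 e0, ?_, ?_⟩
  · have := hX.dotProduct_mulVec_pos (x := Pi.single e0 1) (by
      intro h
      have := congrFun h e0
      simp at this)
    simpa [dotProduct, Matrix.mulVec, Pi.single_apply, Finset.sum_ite_eq,
      Finset.sum_ite_eq'] using this
  · ext k l
    by_cases hkl : k = l
    · subst hkl
      simp [hdiag k, Matrix.one_apply]
    · simp [hoff k l hkl, Matrix.one_apply, hkl]
end

section
/- Let d ≥ 1, let Σ be a d×d real symmetric positive definite matrix with positive definite square root Σ^{1/2}, and let X be a d×d real symmetric positive definite matrix such that (Σ^{1/2} R Σ^{-1/2}) X (Σ^{1/2} R Σ^{-1/2})ᵀ = X for every R ∈ SO(d). Then there exists a real number c > 0 such that X = c • Σ. -/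
open Matrix
open scoped Classical

/-- The positive semidefinite square root of a matrix, extended to a total function
(junk value `0` when the matrix is not positive semidefinite). -/

noncomputable def matSqrt {d : ℕ} (A : Matrix (Fin d) (Fin d) ℝ) : Matrix (Fin d) (Fin d) ℝ :=
  if hA : A.PosSemidef then
    (hA.1.eigenvectorUnitary : Matrix (Fin d) (Fin d) ℝ) * diagonal (Real.sqrt ∘ hA.1.eigenvalues) *
      (star hA.1.eigenvectorUnitary : Matrix (Fin d) (Fin d) ℝ) else 0

/-- If a real symmetric positive definite `d × d` matrix `X` is fixed by the
action `G · X = G X Gᵀ` of every element `G = Σ^{1/2} R Σ^{-1/2}` of `H_Σ` (`R ∈ SO(d)`),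
then `X = c • Σ` for some real `c > 0`. -/
theorem fixed_by_H_sigma_implies_multiple (d : ℕ) (hd : 1 ≤ d)
    (S X : Matrix (Fin d) (Fin d) ℝ) (hS : S.PosDef) (hX : X.PosDef)
    (hfix : ∀ R : Matrix (Fin d) (Fin d) ℝ, R * Rᵀ = 1 → R.det = 1 →
      (matSqrt S * R * (matSqrt S)⁻¹) * X * (matSqrt S * R * (matSqrt S)⁻¹)ᵀ = X) :
    ∃ c : ℝ, 0 < c ∧ X = c • S := by
  set A : Matrix (Fin d) (Fin d) ℝ := matSqrt S with hAdef
  have hAeq : A = (hS.posSemidef.1.eigenvectorUnitary : Matrix (Fin d) (Fin d) ℝ) *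
      diagonal (Real.sqrt ∘ hS.posSemidef.1.eigenvalues) *
      (star hS.posSemidef.1.eigenvectorUnitary : Matrix (Fin d) (Fin d) ℝ) := dif_pos hS.posSemidef
  have hAA : A * A = S := by
    rw [hAeq]
    have hspec := hS.posSemidef.1.spectral_theorem
    rw [Unitary.conjStarAlgAut_apply] at hspec
    have hDD : diagonal (Real.sqrt ∘ hS.posSemidef.1.eigenvalues) *
        diagonal (Real.sqrt ∘ hS.posSemidef.1.eigenvalues) =
        diagonal (RCLike.ofReal ∘ hS.posSemidef.1.eigenvalues) := by
      rw [diagonal_mul_diagonal]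
      congr 1
      funext k
      simp [Real.mul_self_sqrt (hS.posSemidef.eigenvalues_nonneg k)]
    conv_rhs => rw [hspec]
    rw [← hDD]
    simp only [Matrix.mul_assoc]
    congr 2
    rw [← Matrix.mul_assoc (star _ : Matrix (Fin d) (Fin d) ℝ), Unitary.coe_star_mul_self,
      Matrix.one_mul]
  have hAsymm : Aᵀ = A := by
    rw [← Matrix.conjTranspose_eq_transpose_of_trivial, hAeq]
    simp [Matrix.conjTranspose_mul, Matrix.mul_assoc]
    rw [← Matrix.conjTranspose_eq_transpose_of_trivial, ← Matrix.conjTranspose_eq_transpose_of_trivial,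
      Matrix.star_eq_conjTranspose, Matrix.conjTranspose_conjTranspose]
  have hdetS : S.det ≠ 0 := ne_of_gt hS.det_pos
  have hdetA : IsUnit A.det := by
    rw [isUnit_iff_ne_zero]
    intro h
    apply hdetS
    rw [← hAA, Matrix.det_mul, h, mul_zero]
  have hAinv : A * A⁻¹ = 1 := Matrix.mul_nonsing_inv A hdetA
  have hinvA : A⁻¹ * A = 1 := Matrix.nonsing_inv_mul A hdetA
  have hAinvsymm : (A⁻¹)ᵀ = A⁻¹ := by
    rw [Matrix.transpose_nonsing_inv, hAsymm]
  set Y : Matrix (Fin d) (Fin d) ℝ := A⁻¹ * X * A⁻¹ with hYdef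
  have hXsymm : Xᵀ = X := by
    rw [← Matrix.conjTranspose_eq_transpose_of_trivial]; exact hX.1
  have hYsymm : Yᵀ = Y := by
    rw [hYdef, Matrix.transpose_mul, Matrix.transpose_mul, hAinvsymm, hXsymm,
      Matrix.mul_assoc]
  -- For each special orthogonal R, R * Y * Rᵀ = Y
  have hRY : ∀ R : Matrix (Fin d) (Fin d) ℝ, R * Rᵀ = 1 → R.det = 1 →
      R * Y * Rᵀ = Y := by
    intro R hR hRdet
    have h := hfix R hR hRdet
    have h2 : (A * R * A⁻¹)ᵀ = A⁻¹ * Rᵀ * A := by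
      rw [Matrix.transpose_mul, Matrix.transpose_mul, hAinvsymm, hAsymm, Matrix.mul_assoc]
    rw [h2] at h
    have h3 : A⁻¹ * (A * R * A⁻¹ * X * (A⁻¹ * Rᵀ * A)) * A⁻¹ = A⁻¹ * X * A⁻¹ := by
      rw [h]
    calc R * Y * Rᵀ
        = A⁻¹ * (A * R * A⁻¹ * X * (A⁻¹ * Rᵀ * A)) * A⁻¹ := by
          rw [hYdef]
          simp only [Matrix.mul_assoc, hAinv, Matrix.mul_one,
            Matrix.nonsing_inv_mul_cancel_left A _ hdetA,
            Matrix.mul_nonsing_inv_cancel_left A _ hdetA]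
      _ = Y := by rw [h3, hYdef]
  -- entrywise consequences for i ≠ j
  have key : ∀ i j : Fin d, i ≠ j → Y i i = Y j j ∧ Y i j = 0 := by
    intro i j hij
    set σ : Equiv.Perm (Fin d) := Equiv.swap i j with hσ
    set f : Fin d → ℝ := fun k => if k = i then -1 else 1 with hf
    set R : Matrix (Fin d) (Fin d) ℝ := σ.permMatrix ℝ * Matrix.diagonal f with hR
    have hDD : Matrix.diagonal f * Matrix.diagonal f = 1 := by
      rw [Matrix.diagonal_mul_diagonal]
      have hff : (fun k => f k * f k) = fun _ => (1 : ℝ) := by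
        funext k
        by_cases h : k = i <;> simp [hf, h]
      rw [hff, Matrix.diagonal_one]
    have hPt : (σ.permMatrix ℝ)ᵀ = (σ.symm).toPEquiv.toMatrix := by
      rw [Equiv.toPEquiv_symm, PEquiv.toMatrix_symm]
    have hPP : σ.permMatrix ℝ * (σ.symm).toPEquiv.toMatrix = 1 := by
      rw [← PEquiv.toMatrix_trans, ← Equiv.toPEquiv_trans]
      simp
    have hRorth : R * Rᵀ = 1 := by
      rw [hR, Matrix.transpose_mul, Matrix.diagonal_transpose, hPt,
        Matrix.mul_assoc, ← Matrix.mul_assoc (Matrix.diagonal f), hDD, Matrix.one_mul, hPP]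
    have hfprod : ∏ k, f k = -1 := by
      rw [hf]
      rw [Finset.prod_ite_eq' Finset.univ i (fun _ => (-1 : ℝ))]
      simp
    have hRdet : R.det = 1 := by
      rw [hR, Matrix.det_mul, Matrix.det_permutation, Matrix.det_diagonal, hfprod,
        Equiv.Perm.sign_swap hij]
      norm_num
    have h := hRY R hRorth hRdet
    have hform : R * Y * Rᵀ = (Matrix.diagonal f * Y * Matrix.diagonal f).submatrix σ σ := by
      rw [hR, Matrix.transpose_mul, Matrix.diagonal_transpose, hPt]
      have : σ.permMatrix ℝ * Matrix.diagonal f * Y * (Matrix.diagonal f * σ.symm.toPEquiv.toMatrix)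
          = σ.toPEquiv.toMatrix * (Matrix.diagonal f * Y * Matrix.diagonal f) * σ.symm.toPEquiv.toMatrix := by
        simp only [Matrix.mul_assoc]
      rw [this, PEquiv.toMatrix_toPEquiv_mul, PEquiv.mul_toMatrix_toPEquiv]
      simp
    rw [hform] at h
    have hentry : ∀ a b, f (σ a) * Y (σ a) (σ b) * f (σ b) = Y a b := by
      intro a b
      have hab := congrFun (congrFun h a) b
      rw [Matrix.submatrix_apply, Matrix.mul_diagonal, Matrix.diagonal_mul] at hab
      exact hab
    have h1 := hentry j j
    have h2 := hentry i j
    simp only [hσ, Equiv.swap_apply_right, Equiv.swap_apply_left] at h1 h2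
    simp only [hf, if_pos rfl, if_neg hij.symm] at h1 h2
    have hsym : Y i j = Y j i := by
      have := congrFun (congrFun hYsymm j) i
      simpa [Matrix.transpose_apply] using this
    constructor
    · linarith
    · linarith
  set i0 : Fin d := ⟨0, hd⟩ with hi0
  set c : ℝ := Y i0 i0 with hc
  have hYc : Y = c • (1 : Matrix (Fin d) (Fin d) ℝ) := by
    ext a b
    by_cases hab : a = b
    · subst hab
      by_cases ha : a = i0
      · subst ha; simp [hc]
      · have := (key a i0 ha).1
        simp [hc, ← this, Matrix.one_apply]
    · have := (key a b hab).2
      simp [this, Matrix.one_apply, hab]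
  have hXcS : X = c • S := by
    have : A * Y * A = X := by
      rw [hYdef]
      simp only [Matrix.mul_assoc]
      rw [hinvA, Matrix.mul_one, ← Matrix.mul_assoc, hAinv, Matrix.one_mul]
    rw [← this, hYc]
    rw [Matrix.mul_smul, Matrix.smul_mul, Matrix.mul_one, hAA]
  refine ⟨c, ?_, hXcS⟩
  -- positivity of c
  set v : Fin d → ℝ := Pi.single i0 1 with hv
  have hvne : v ≠ 0 := by
    intro h
    have := congrFun h i0
    simp [hv] at this
  have hXv := hX.dotProduct_mulVec_pos hvne
  have hSv := hS.dotProduct_mulVec_pos hvne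
  rw [hXcS] at hXv
  have : dotProduct (star v) ((c • S) *ᵥ v) = c * dotProduct (star v) (S *ᵥ v) := by
    rw [Matrix.smul_mulVec, dotProduct_smul, smul_eq_mul]
  rw [this] at hXv
  by_contra hcneg
  push_neg at hcneg
  nlinarith
end

section
/- Let d ≥ 1 and let k₁ > 0 and k₂ > 0 be real constants. Then the function (λ₁, …, λ_d) ↦ (Σᵢ (log λᵢ)²) · (Πᵢ λᵢ^{k₁}) · exp(-½ Σᵢ λᵢ) · Π_{i > j} |λᵢ - λⱼ|^{k₂} is integrable on the open positive orthant (0, ∞)^d with respect to Lebesgue measure. -/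
open MeasureTheory Real Set

lemma int_one {s : ℝ} (hs : -1 < s) :
    IntegrableOn (fun x : ℝ => x ^ s * Real.exp (-(1/2) * x)) (Set.Ioi 0) volume := by
  have := integrableOn_rpow_mul_exp_neg_mul_rpow (p := 1) (s := s) (b := 1/2) hs one_pos
    (by norm_num)
  simpa [Real.rpow_one] using this

lemma int_pow (n : ℕ) : ∀ {s : ℝ}, -1 < s →
    IntegrableOn (fun x : ℝ => x ^ s * (1 + x) ^ n * Real.exp (-(1/2) * x)) (Set.Ioi 0)
      volume := by
  induction n with
  | zero => intro s hs; simpa using int_one hs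
  | succ n ih =>
    intro s hs
    have h1 := ih hs
    have h2 := ih (s := s + 1) (by linarith)
    refine IntegrableOn.congr_fun (h1.add h2) (fun x hx => ?_) measurableSet_Ioi
    have hx0 : (x : ℝ) ≠ 0 := ne_of_gt hx
    simp only [Pi.add_apply]
    rw [Real.rpow_add_one hx0]
    ring

lemma meas_base {s c : ℝ} :
    Measurable (fun x : ℝ => x ^ s * (1 + x) ^ c * Real.exp (-(1/2) * x)) :=
  ((measurable_id.pow measurable_const).mul
    ((measurable_const.add measurable_id).pow measurable_const)).mul
    ((measurable_id.const_mul _).exp)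

lemma int_rpow {s c : ℝ} (hs : -1 < s) (hc : 0 ≤ c) :
    IntegrableOn (fun x : ℝ => x ^ s * (1 + x) ^ c * Real.exp (-(1/2) * x)) (Set.Ioi 0)
      volume := by
  refine (int_pow ⌈c⌉₊ hs).mono' meas_base.aestronglyMeasurable ?_
  filter_upwards [ae_restrict_mem measurableSet_Ioi] with x hx
  have hx0 : (0:ℝ) < x := hx
  have h1x : (1:ℝ) ≤ 1 + x := by linarith
  have hb : (1 + x) ^ c ≤ (1 + x) ^ (⌈c⌉₊ : ℕ) := by
    rw [← Real.rpow_natCast]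
    exact Real.rpow_le_rpow_of_exponent_le h1x (Nat.le_ceil c)
  rw [Real.norm_eq_abs, abs_of_nonneg (by positivity)]
  have h0 : 0 ≤ x ^ s := Real.rpow_nonneg hx0.le s
  have h0' : 0 ≤ Real.exp (-(1/2) * x) := (Real.exp_pos _).le
  exact mul_le_mul_of_nonneg_right (mul_le_mul_of_nonneg_left hb h0) h0'

lemma abs_log_le' {x ε : ℝ} (hx : 0 < x) (hε : 0 < ε) :
    |Real.log x| ≤ (x ^ ε + x ^ (-ε)) / ε := by
  rcases le_or_gt 1 x with h | h
  · rw [abs_of_nonneg (Real.log_nonneg h)]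
    calc Real.log x ≤ x ^ ε / ε := Real.log_le_rpow_div hx.le hε
      _ ≤ (x ^ ε + x ^ (-ε)) / ε := by
          gcongr
          linarith [Real.rpow_nonneg hx.le (-ε)]
  · rw [abs_of_nonpos (Real.log_nonpos hx.le h.le)]
    have hinv : Real.log x⁻¹ ≤ x⁻¹ ^ ε / ε := Real.log_le_rpow_div (by positivity) hε
    rw [Real.log_inv, Real.inv_rpow hx.le, ← Real.rpow_neg hx.le] at hinv
    calc -Real.log x ≤ x ^ (-ε) / ε := hinv
      _ ≤ (x ^ ε + x ^ (-ε)) / ε := by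
          gcongr
          linarith [Real.rpow_nonneg hx.le ε]

lemma int_log {s c : ℝ} (hs : -1 < s) (hc : 0 ≤ c) :
    IntegrableOn
      (fun x : ℝ => Real.log x ^ 2 * (x ^ s * (1 + x) ^ c * Real.exp (-(1/2) * x)))
      (Set.Ioi 0) volume := by
  set ε : ℝ := (s + 1) / 4 with hεdef
  have hε : 0 < ε := by simp only [hεdef]; linarith
  have hs1 : (-1:ℝ) < s + 2*ε := by linarith
  have hs2 : (-1:ℝ) < s - 2*ε := by simp only [hεdef]; linarith
  have hg : IntegrableOn
      (fun x : ℝ => (1/ε^2) * ((x ^ (s + 2*ε) * (1 + x) ^ c * Real.exp (-(1/2) * x))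
        + 2 * (x ^ s * (1 + x) ^ c * Real.exp (-(1/2) * x))
        + (x ^ (s - 2*ε) * (1 + x) ^ c * Real.exp (-(1/2) * x)))) (Set.Ioi 0) volume :=
    (((int_rpow hs1 hc).add ((int_rpow hs hc).const_mul 2)).add
      (int_rpow hs2 hc)).const_mul _
  refine hg.mono' (((Real.measurable_log.pow measurable_const).mul
    meas_base).aestronglyMeasurable) ?_
  filter_upwards [ae_restrict_mem measurableSet_Ioi] with x hx
  have hx0 : (0:ℝ) < x := hx
  have e1 : x ^ ε * x ^ ε = x ^ (2*ε) := by rw [← Real.rpow_add hx0]; ring_nf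
  have e2 : x ^ (-ε) * x ^ (-ε) = x ^ (-(2*ε)) := by rw [← Real.rpow_add hx0]; ring_nf
  have e3 : x ^ ε * x ^ (-ε) = 1 := by rw [← Real.rpow_add hx0]; simp
  have hlog : Real.log x ^ 2 ≤ (1/ε^2) * (x ^ (2*ε) + 2 + x ^ (-(2*ε))) := by
    have h := abs_log_le' hx0 hε
    have hsq : Real.log x ^ 2 ≤ ((x ^ ε + x ^ (-ε)) / ε) ^ 2 := by
      rw [← sq_abs]
      apply sq_le_sq' _ h
      have h2 : 0 ≤ (x ^ ε + x ^ (-ε)) / ε := by positivity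
      linarith [abs_nonneg (Real.log x)]
    refine hsq.trans (le_of_eq ?_)
    have key : (x ^ ε + x ^ (-ε))^2 = x ^ (2*ε) + 2 + x ^ (-(2*ε)) := by
      calc (x ^ ε + x ^ (-ε))^2
          = x ^ ε * x ^ ε + 2*(x ^ ε * x ^ (-ε)) + x ^ (-ε) * x ^ (-ε) := by ring
        _ = x ^ (2*ε) + 2 + x ^ (-(2*ε)) := by rw [e1, e2, e3]; ring
    rw [div_pow, key]
    field_simp
  have hP : 0 ≤ x ^ s * (1 + x) ^ c * Real.exp (-(1/2) * x) := by positivity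
  rw [Real.norm_eq_abs, abs_of_nonneg (by positivity)]
  have e4 : x ^ (s + 2*ε) = x ^ s * x ^ (2*ε) := Real.rpow_add hx0 _ _
  have e5 : x ^ (s - 2*ε) = x ^ s * x ^ (-(2*ε)) := by
    rw [sub_eq_add_neg, Real.rpow_add hx0]
  calc Real.log x ^ 2 * (x ^ s * (1 + x) ^ c * Real.exp (-(1/2) * x))
      ≤ ((1/ε^2) * (x ^ (2*ε) + 2 + x ^ (-(2*ε)))) *
        (x ^ s * (1 + x) ^ c * Real.exp (-(1/2) * x)) :=
        mul_le_mul_of_nonneg_right hlog hP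
    _ = (1/ε^2) * ((x ^ (s + 2*ε) * (1 + x) ^ c * Real.exp (-(1/2) * x))
        + 2 * (x ^ s * (1 + x) ^ c * Real.exp (-(1/2) * x))
        + (x ^ (s - 2*ε) * (1 + x) ^ c * Real.exp (-(1/2) * x))) := by
        rw [e4, e5]; ring

/-- the function
`λ ↦ (Σᵢ (log λᵢ)²) · (Πᵢ λᵢ^{k₁}) · exp(-½ Σᵢ λᵢ) · Π_{i > j} |λᵢ - λⱼ|^{k₂}`
is Lebesgue-integrable on the open positive orthant `(0, ∞)^d`, for any constants
`k₁, k₂ > 0`.  (This is the integrand expressing the finiteness of the second moment of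
the projective Wishart distribution with respect to the joint eigenvalue density of the
Wishart distribution.) -/
theorem wishart_eigenvalue_second_moment_integrable (d : ℕ) (hd : 1 ≤ d)
    (k₁ k₂ : ℝ) (hk₁ : 0 < k₁) (hk₂ : 0 < k₂) :
    IntegrableOn
      (fun l : Fin d → ℝ =>
        (∑ i, Real.log (l i) ^ 2) * (∏ i, l i ^ k₁) * Real.exp (-(1 / 2) * ∑ i, l i) *
          ∏ p ∈ Finset.univ.filter (fun p : Fin d × Fin d => p.2 < p.1), |l p.1 - l p.2| ^ k₂)
      {l : Fin d → ℝ | ∀ i, 0 < l i} volume := by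
  classical
  set N : ℕ := (Finset.univ.filter (fun p : Fin d × Fin d => p.2 < p.1)).card with hN
  set c : ℝ := 2 * k₂ * N with hc
  have hc0 : 0 ≤ c := by positivity
  set h : ℝ → ℝ := fun x => x ^ k₁ * (1 + x) ^ c * Real.exp (-(1/2) * x) with hh
  set ψ : Fin d → Fin d → ℝ → ℝ := fun i j =>
    (Set.Ioi (0:ℝ)).indicator (fun x => (if j = i then Real.log x ^ 2 else 1) * h x) with hψ
  have hk₁' : (-1:ℝ) < k₁ := by linarith
  have hψ_int : ∀ i j, Integrable (ψ i j) volume := by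
    intro i j
    rw [hψ]
    simp only
    rw [integrable_indicator_iff measurableSet_Ioi]
    by_cases hji : j = i
    · simp only [hji, if_pos rfl]
      exact int_log hk₁' hc0
    · simp only [if_neg hji, one_mul]
      exact int_rpow hk₁' hc0
  have hG : Integrable (fun l : Fin d → ℝ => ∑ i, ∏ j, ψ i j (l j)) volume :=
    integrable_finset_sum _ (fun i _ => Integrable.fintype_prod (f := ψ i) (fun j => hψ_int i j))
  have hSmeas : MeasurableSet {l : Fin d → ℝ | ∀ i, 0 < l i} := by
    have : {l : Fin d → ℝ | ∀ i, 0 < l i} = ⋂ i, {l | 0 < l i} := by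
      ext l; simp [Set.mem_iInter]
    rw [this]
    exact MeasurableSet.iInter fun i =>
      measurableSet_lt measurable_const (measurable_pi_apply i)
  refine Integrable.mono' hG.integrableOn ?_ ?_
  · refine Measurable.aestronglyMeasurable ?_
    have m1 : Measurable fun l : Fin d → ℝ => ∑ i, Real.log (l i) ^ 2 :=
      Finset.measurable_sum _ fun i _ =>
        (Real.measurable_log.comp (measurable_pi_apply i)).pow measurable_const
    have m2 : Measurable fun l : Fin d → ℝ => ∏ i, l i ^ k₁ :=
      Finset.measurable_prod _ fun i _ => (measurable_pi_apply i).pow measurable_const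
    have m3 : Measurable fun l : Fin d → ℝ => Real.exp (-(1/2) * ∑ i, l i) :=
      ((Finset.measurable_sum _ fun i _ => measurable_pi_apply i).const_mul _).exp
    have m4 : Measurable fun l : Fin d → ℝ =>
        ∏ p ∈ Finset.univ.filter (fun p : Fin d × Fin d => p.2 < p.1), |l p.1 - l p.2| ^ k₂ :=
      Finset.measurable_prod _ fun p _ =>
        (((measurable_pi_apply p.1).sub (measurable_pi_apply p.2)).abs).pow measurable_const
    exact ((m1.mul m2).mul m3).mul m4
  · filter_upwards [ae_restrict_mem hSmeas] with l hl
    have hl : ∀ i, 0 < l i := hl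
    -- evaluate ψ
    have hψ_eval : ∀ i j, ψ i j (l j) = (if j = i then Real.log (l j) ^ 2 else 1) * h (l j) :=
      fun i j => Set.indicator_of_mem (hl j) _
    set P1 : ℝ := ∏ j, (1 + l j) with hP1def
    have hfac : ∀ a : Fin d, 1 + l a ≤ P1 := by
      intro a
      rw [hP1def, ← Finset.mul_prod_erase Finset.univ _ (Finset.mem_univ a)]
      have hrest : (1:ℝ) ≤ ∏ j ∈ Finset.univ.erase a, (1 + l j) := by
        calc (1:ℝ) = ∏ _j ∈ Finset.univ.erase a, (1:ℝ) := by simp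
          _ ≤ _ := Finset.prod_le_prod (fun _ _ => zero_le_one) (fun j _ => by linarith [hl j])
      exact le_mul_of_one_le_right (by linarith [hl a]) hrest
    have hP1 : (1:ℝ) ≤ P1 := by
      rw [hP1def]
      calc (1:ℝ) = ∏ _j : Fin d, (1:ℝ) := by simp
        _ ≤ _ := Finset.prod_le_prod (fun _ _ => zero_le_one) (fun j _ => by linarith [hl j])
    have hP1pos : (0:ℝ) < P1 := lt_of_lt_of_le one_pos hP1
    have hGl : (∑ i, ∏ j, ψ i j (l j)) =
        (∑ i, Real.log (l i) ^ 2) * (∏ i, l i ^ k₁) * Real.exp (-(1/2) * ∑ i, l i) *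
          P1 ^ c := by
      have hprod : ∀ i, (∏ j, ψ i j (l j)) = Real.log (l i) ^ 2 * ∏ j, h (l j) := by
        intro i
        calc (∏ j, ψ i j (l j))
            = ∏ j, ((if j = i then Real.log (l j) ^ 2 else 1) * h (l j)) :=
              Finset.prod_congr rfl fun j _ => hψ_eval i j
          _ = (∏ j, if j = i then Real.log (l j) ^ 2 else 1) * ∏ j, h (l j) :=
              Finset.prod_mul_distrib
          _ = Real.log (l i) ^ 2 * ∏ j, h (l j) := by
              rw [Finset.prod_ite_eq' Finset.univ i (fun j => Real.log (l j) ^ 2)]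
              simp
      have hhprod : (∏ j, h (l j)) =
          (∏ i, l i ^ k₁) * Real.exp (-(1/2) * ∑ i, l i) * P1 ^ c := by
        rw [hh]
        simp only
        rw [Finset.prod_mul_distrib, Finset.prod_mul_distrib, ← Real.exp_sum]
        rw [Real.finset_prod_rpow Finset.univ _ (fun j _ => by linarith [hl j]) c]
        rw [← Finset.mul_sum]
        ring
      simp only [hprod, hhprod, ← Finset.sum_mul]
      ring
    rw [hGl]
    -- nonnegativity of the LHS
    have hA : 0 ≤ ∑ i, Real.log (l i) ^ 2 := Finset.sum_nonneg fun i _ => sq_nonneg _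
    have hB : 0 ≤ ∏ i, l i ^ k₁ :=
      Finset.prod_nonneg fun i _ => Real.rpow_nonneg (hl i).le _
    have hE : 0 ≤ Real.exp (-(1/2) * ∑ i, l i) := (Real.exp_pos _).le
    have hQ : 0 ≤ ∏ p ∈ Finset.univ.filter (fun p : Fin d × Fin d => p.2 < p.1),
        |l p.1 - l p.2| ^ k₂ :=
      Finset.prod_nonneg fun p _ => Real.rpow_nonneg (abs_nonneg _) _
    rw [Real.norm_eq_abs, abs_of_nonneg (by positivity)]
    -- key bound on the pair product
    have hpair : ∀ p : Fin d × Fin d, |l p.1 - l p.2| ^ k₂ ≤ P1 ^ (2 * k₂) := by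
      intro p
      have h1 : 1 + l p.1 ≤ P1 := hfac p.1
      have h2 : 1 + l p.2 ≤ P1 := hfac p.2
      have habs : |l p.1 - l p.2| ≤ P1 ^ (2:ℝ) := by
        rw [abs_sub_le_iff]
        have hsq : P1 ^ (2:ℝ) = P1 * P1 := by
          rw [show (2:ℝ) = ((2:ℕ):ℝ) by norm_num, Real.rpow_natCast]; ring
        constructor <;> (rw [hsq]; nlinarith [hl p.1, hl p.2])
      calc |l p.1 - l p.2| ^ k₂ ≤ (P1 ^ (2:ℝ)) ^ k₂ :=
            Real.rpow_le_rpow (abs_nonneg _) habs hk₂.le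
        _ = P1 ^ (2 * k₂) := by rw [← Real.rpow_mul hP1pos.le]
    have hQR : (∏ p ∈ Finset.univ.filter (fun p : Fin d × Fin d => p.2 < p.1),
        |l p.1 - l p.2| ^ k₂) ≤ P1 ^ c := by
      calc (∏ p ∈ Finset.univ.filter (fun p : Fin d × Fin d => p.2 < p.1),
            |l p.1 - l p.2| ^ k₂)
          ≤ ∏ _p ∈ Finset.univ.filter (fun p : Fin d × Fin d => p.2 < p.1), P1 ^ (2 * k₂) :=
            Finset.prod_le_prod (fun p _ => Real.rpow_nonneg (abs_nonneg _) _)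
              (fun p _ => hpair p)
        _ = (P1 ^ (2 * k₂)) ^ N := by rw [Finset.prod_const, hN]
        _ = P1 ^ c := by
            rw [← Real.rpow_natCast (P1 ^ (2 * k₂)) N, ← Real.rpow_mul hP1pos.le, hc]
    calc (∑ i, Real.log (l i) ^ 2) * (∏ i, l i ^ k₁) * Real.exp (-(1/2) * ∑ i, l i) *
          ∏ p ∈ Finset.univ.filter (fun p : Fin d × Fin d => p.2 < p.1), |l p.1 - l p.2| ^ k₂
        ≤ (∑ i, Real.log (l i) ^ 2) * (∏ i, l i ^ k₁) * Real.exp (-(1/2) * ∑ i, l i) *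
          P1 ^ c := by
          apply mul_le_mul_of_nonneg_left hQR
          positivity
      _ = _ := by norm_num
end
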